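/- For all N ≥ 2 and s ≥ 1, the sequence of ordinary multinomials is strictly increasing up to the middle: ⟨N,k⟩_s < ⟨N,k+1⟩_s for all 0 ≤ k < ⌊sN/2⌋. -/

import Mathlib

/-- The ordinary multinomial `⟨N,k⟩ₛ`: the coefficient of `T^k` in `(1+T+⋯+T^s)^N`,
with value `0` for `k < 0`. -/
noncomputable def ordMultinomial (N s : ℕ) (k : ℤ) : ℕ :=
  if 0 ≤ k then
    (((∑ i ∈ Finset.range (s + 1), (Polynomial.X : Polynomial ℕ) ^ i)) ^ N).coeff k.toNat
  else 0

lemma ord_neg (N s : ℕ) (k : ℤ) (hk : k < 0) : ordMultinomial N s k = 0 := by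
  simp [ordMultinomial, not_le.mpr hk]

lemma geom_coeff (s i : ℕ) :
    (∑ j ∈ Finset.range (s + 1), (Polynomial.X : Polynomial ℕ) ^ j).coeff i
      = if i ≤ s then 1 else 0 := by
  rw [Polynomial.finset_sum_coeff]
  simp [Polynomial.coeff_X_pow, Nat.lt_succ_iff]

lemma ord_rec (N s : ℕ) (k : ℤ) :
    ordMultinomial (N + 1) s k = ∑ i ∈ Finset.range (s + 1), ordMultinomial N s (k - i) := by
  rcases lt_or_ge k 0 with hk | hk
  · rw [ord_neg _ _ _ hk]
    symm
    apply Finset.sum_eq_zero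
    intro i _
    exact ord_neg _ _ _ (by have : (0:ℤ) ≤ i := Int.natCast_nonneg i; omega)
  · set n := k.toNat with hn
    have hkn : k = (n : ℤ) := by omega
    have hrhs : ∀ i ∈ Finset.range (s + 1), ordMultinomial N s (k - i)
        = if i ≤ n then
            (((∑ j ∈ Finset.range (s + 1), (Polynomial.X : Polynomial ℕ) ^ j)) ^ N).coeff (n - i)
          else 0 := by
      intro i _
      by_cases h : i ≤ n
      · have h0 : (0:ℤ) ≤ k - i := by omega
        have h1 : (k - i).toNat = n - i := by omega
        simp [ordMultinomial, h0, h1, h]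
        intro; omega
      · have h0 : ¬ (0:ℤ) ≤ k - i := by omega
        simp [ordMultinomial, h0, h]
        intro; omega
    rw [Finset.sum_congr rfl hrhs]
    have hlhs : ordMultinomial (N + 1) s k
        = ∑ i ∈ Finset.range (n + 1),
            (if i ≤ s then
              (((∑ j ∈ Finset.range (s + 1), (Polynomial.X : Polynomial ℕ) ^ j)) ^ N).coeff (n - i)
            else 0) := by
      simp only [ordMultinomial, hk, if_pos]
      rw [pow_succ']
      rw [Polynomial.coeff_mul, Finset.Nat.sum_antidiagonal_eq_sum_range_succ_mk]
      apply Finset.sum_congr rfl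
      intro i _
      rw [geom_coeff]
      split_ifs <;> simp [hn]
    rw [hlhs]
    -- both sides equal sum over range (max n s + 1)
    set g : ℕ → ℕ := fun i => if i ≤ s ∧ i ≤ n then
        (((∑ j ∈ Finset.range (s + 1), (Polynomial.X : Polynomial ℕ) ^ j)) ^ N).coeff (n - i)
      else 0 with hg
    have e1 : ∑ i ∈ Finset.range (n + 1),
        (if i ≤ s then
          (((∑ j ∈ Finset.range (s + 1), (Polynomial.X : Polynomial ℕ) ^ j)) ^ N).coeff (n - i)
        else 0) = ∑ i ∈ Finset.range (n + 1), g i := by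
      apply Finset.sum_congr rfl
      intro i hi
      have : i ≤ n := by simpa [Nat.lt_succ_iff] using hi
      simp only [hg]
      split_ifs <;> tauto
    have e2 : ∑ i ∈ Finset.range (s + 1),
        (if i ≤ n then
          (((∑ j ∈ Finset.range (s + 1), (Polynomial.X : Polynomial ℕ) ^ j)) ^ N).coeff (n - i)
        else 0) = ∑ i ∈ Finset.range (s + 1), g i := by
      apply Finset.sum_congr rfl
      intro i hi
      have : i ≤ s := by simpa [Nat.lt_succ_iff] using hi
      simp only [hg]
      split_ifs <;> tauto
    rw [e1, e2]
    have e3 : ∀ m : ℕ, n ≤ m → ∑ i ∈ Finset.range (m + 1), g i = ∑ i ∈ Finset.range (n + 1), g i := by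
      intro m hm
      symm
      apply Finset.sum_subset (Finset.range_subset_range.mpr (by omega))
      intro i _ hi
      have h2 : ¬ i ≤ n := by simp only [Finset.mem_range, Nat.lt_succ_iff] at hi; omega
      simp [hg, h2]
    have e4 : ∀ m : ℕ, s ≤ m → ∑ i ∈ Finset.range (m + 1), g i = ∑ i ∈ Finset.range (s + 1), g i := by
      intro m hm
      symm
      apply Finset.sum_subset (Finset.range_subset_range.mpr (by omega))
      intro i _ hi
      have h2 : ¬ i ≤ s := by simp only [Finset.mem_range, Nat.lt_succ_iff] at hi; omega
      simp [hg, h2]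
    rw [← e3 (max n s) (le_max_left _ _), e4 (max n s) (le_max_right _ _)]

lemma ord_zero_eq (s : ℕ) (k : ℤ) : ordMultinomial 0 s k = if k = 0 then 1 else 0 := by
  simp only [ordMultinomial, pow_zero, Polynomial.coeff_one]
  split_ifs <;> first | rfl | omega

lemma ord_symm (N s : ℕ) (k : ℤ) :
    ordMultinomial N s ((s * N : ℕ) - k) = ordMultinomial N s k := by
  induction N generalizing k with
  | zero =>
    rw [ord_zero_eq, ord_zero_eq]
    have : (↑(s * 0) : ℤ) = 0 := by norm_num
    rw [this]
    split_ifs <;> omega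
  | succ N IH =>
    rw [ord_rec, ord_rec]
    rw [← Finset.sum_range_reflect
      (fun j => ordMultinomial N s (((s * (N + 1) : ℕ) : ℤ) - k - j)) (s + 1)]
    apply Finset.sum_congr rfl
    intro i hi
    have his : i ≤ s := by simpa [Nat.lt_succ_iff] using hi
    have he : ((s * (N + 1) : ℕ) : ℤ) - k - ((s + 1 - 1 - i : ℕ) : ℤ)
        = ((s * N : ℕ) : ℤ) - (k - i) := by
      have e : s * (N + 1) = s * N + s := by ring
      omega
    rw [he, IH]

lemma ord_pos (N s : ℕ) (k : ℤ) (h0 : 0 ≤ k) (h1 : k ≤ (s * N : ℕ)) :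
    0 < ordMultinomial N s k := by
  induction N generalizing k with
  | zero =>
    rw [ord_zero_eq]
    have h1' : k ≤ 0 := by simpa using h1
    have : k = 0 := le_antisymm h1' h0
    simp [this]
  | succ N IH =>
    rw [ord_rec]
    have e : s * (N + 1) = s * N + s := by ring
    apply Finset.sum_pos' (fun i _ => Nat.zero_le _)
    refine ⟨(k - (s * N : ℕ)).toNat, ?_, IH _ (by omega) (by omega)⟩
    simp only [Finset.mem_range]
    omega

lemma ord_mono (N s : ℕ)
    (hQ : ∀ k : ℤ, 0 ≤ k → 2 * (k + 1) ≤ (s * N : ℕ) →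
      ordMultinomial N s k < ordMultinomial N s (k + 1)) :
    ∀ a b : ℤ, 0 ≤ a → a + 1 ≤ b → 2 * b ≤ (s * N : ℕ) →
      ordMultinomial N s a < ordMultinomial N s b := by
  intro a b ha h1
  refine Int.le_induction
    (motive := fun b _ => 2 * b ≤ ((s * N : ℕ) : ℤ) →
      ordMultinomial N s a < ordMultinomial N s b) ?_ ?_ b h1
  · intro h2; exact hQ a ha h2
  · intro n hn IH h2
    exact lt_trans (IH (by omega)) (hQ n (by omega) (by omega))

lemma ord_gap (N s : ℕ)
    (hQ : ∀ k : ℤ, 0 ≤ k → 2 * (k + 1) ≤ (s * N : ℕ) →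
      ordMultinomial N s k < ordMultinomial N s (k + 1)) :
    ∀ a b : ℤ, a < b → a + b < (s * N : ℕ) → 0 ≤ b → b ≤ (s * N : ℕ) →
      ordMultinomial N s a < ordMultinomial N s b := by
  intro a b hab habM hb hbM
  rcases lt_or_ge a 0 with ha | ha
  · rw [ord_neg _ _ _ ha]
    exact ord_pos N s b hb hbM
  · rcases le_or_gt (2 * b) ((s * N : ℕ) : ℤ) with h | h
    · exact ord_mono N s hQ a b ha (by omega) h
    · rw [← ord_symm N s b]
      exact ord_mono N s hQ a ((s * N : ℕ) - b) ha (by omega) (by omega)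

lemma ord_diff (N s : ℕ) (k : ℤ) :
    ordMultinomial (N + 1) s (k + 1) + ordMultinomial N s (k - s)
      = ordMultinomial (N + 1) s k + ordMultinomial N s (k + 1) := by
  rw [ord_rec, ord_rec]
  have h1 : ∑ i ∈ Finset.range (s + 1), ordMultinomial N s (k + 1 - i)
        + ordMultinomial N s (k - s)
      = ∑ i ∈ Finset.range (s + 2), ordMultinomial N s (k + 1 - i) := by
    symm
    rw [Finset.sum_range_succ]
    congr 2
    push_cast; ring
  have h2 : ∑ i ∈ Finset.range (s + 1), ordMultinomial N s (k - i)
        + ordMultinomial N s (k + 1)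
      = ∑ i ∈ Finset.range (s + 2), ordMultinomial N s (k + 1 - i) := by
    symm
    rw [Finset.sum_range_succ']
    congr 1
    · apply Finset.sum_congr rfl
      intro i _
      congr 1
      push_cast; ring
    · norm_num
  rw [h1, h2]

lemma ordQ (s : ℕ) (hs : 1 ≤ s) :
    ∀ N, 2 ≤ N → ∀ k : ℤ, 0 ≤ k → 2 * (k + 1) ≤ (s * N : ℕ) →
      ordMultinomial N s k < ordMultinomial N s (k + 1) := by
  intro N hN
  induction N, hN using Nat.le_induction with
  | base =>
    intro k hk h2
    have hd := ord_diff 1 s k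
    norm_num at hd
    have e : s * 2 = s * 1 + s := by ring
    have hz : ordMultinomial 1 s (k - s) = 0 := ord_neg _ _ _ (by omega)
    have hp : 0 < ordMultinomial 1 s (k + 1) := ord_pos 1 s (k + 1) (by omega) (by omega)
    omega
  | succ N hN IH =>
    intro k hk h2
    have hd := ord_diff N s k
    have e : s * (N + 1) = s * N + s := by ring
    have hsN : s ≤ s * N := Nat.le_mul_of_pos_right s (by omega)
    have hlt : ordMultinomial N s (k - s) < ordMultinomial N s (k + 1) :=
      ord_gap N s IH (k - s) (k + 1) (by omega) (by omega) (by omega) (by omega)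
    omega

theorem stmt_7 (N s : ℕ) (hN : 2 ≤ N) (hs : 1 ≤ s) (k : ℕ) (hk : k < s * N / 2) :
    ordMultinomial N s k < ordMultinomial N s (k + 1) := by
  exact ordQ s hs N hN k (by positivity) (by omega)
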